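/- In the lattice L with k = 8, set P = H − E₁ − E₂ − X, S = 3H − (E₂ + E₃ + E₄ + E₅ + E₆ + E₇) − 2X − Y, and vᵢ = E_{i+1} − E_i for i = 1,…,6. Then: (i) ⟨S,S⟩ = ⟨P,P⟩ = ⟨vᵢ,vᵢ⟩ = −2 for all i; (ii) the pairings among the eight vectors S, −P, v₁,…,v₆ are ⟨S,v₁⟩ = 1, ⟨−P,v₂⟩ = 1, ⟨vᵢ,v_{i+1}⟩ = 1 for i = 1,…,5, and all other pairings between distinct vectors in the list are 0 (in particular ⟨S,−P⟩ = 0, ⟨S,vᵢ⟩ = 0 for i ≥ 2, ⟨−P,vᵢ⟩ = 0 for i ≠ 2), so the intersection graph of the eight vectors is the E₈ Dynkin diagram with trivalent vertex v₂; (iii) each of the eight vectors is orthogonal to E', G', F and C; (iv) ⟨v,D⟩ = 0 for each vector v in the list except v₂, and ⟨v₂,D⟩ = 1. -/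

import Mathlib

namespace ALE.E8

/-- The lattice `L ≅ ℤ¹²` (`k = 8`) with basis `H, E₁, …, E₇, X, Y, F, C`
(indices `0, 1, …, 7, 8, 9, 10, 11`). -/
abbrev L : Type := Fin 12 → ℤ

/-- The intersection pairing: distinct basis vectors are orthogonal, `⟨H,H⟩ = 1`
and every other basis vector has self-pairing `−1`. -/
def pairing (u v : L) : ℤ := ∑ i, (if i = 0 then 1 else -1) * u i * v i

def H : L := Pi.single 0 1
open Fin.NatCast in
def E (i : ℕ) : L := Pi.single (i : Fin 12) 1
def X : L := Pi.single 8 1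
def Y : L := Pi.single 9 1
def F : L := Pi.single 10 1
def C : L := Pi.single 11 1

/-- `E' = 2H − (E₁ + ⋯ + E₇) − F − C`. -/
def E' : L := (2 : ℤ) • H - (∑ i ∈ Finset.Icc 1 7, E i) - F - C

/-- `G' = H − X − F − Y − C`. -/
def G' : L := H - X - F - Y - C

/-- `D = E' + Σ_{i=3}^{7} (H − Eᵢ − X)`, the class of the polar divisor
`E + Ē₃ + ⋯ + Ē₇`. -/
def D : L := E' + ∑ i ∈ Finset.Icc 3 7, (H - E i - X)

/-- `P = H − E₁ − E₂ − X`. -/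
def P : L := H - E 1 - E 2 - X

/-- `S = 3H − (E₂ + E₃ + E₄ + E₅ + E₆ + E₇) − 2X − Y`. -/
def S : L := (3 : ℤ) • H - (E 2 + E 3 + E 4 + E 5 + E 6 + E 7) - (2 : ℤ) • X - Y

/-- `vᵢ = E_{i+1} − Eᵢ`. -/
def v (i : ℕ) : L := E (i + 1) - E i

/-- The list of eight vectors `S, −P, v₁, …, v₆`. -/
def w : Fin 8 → L := ![S, -P, v 1, v 2, v 3, v 4, v 5, v 6]

/-- The edges of the E₈ Dynkin diagram on the eight vectors: `S–v₁`, `−P–v₂`,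
and `vᵢ–v_{i+1}` for `i = 1, …, 5`; the trivalent vertex is `v₂` (index `3`). -/
def edges : List (Fin 8 × Fin 8) := [(0, 2), (1, 3), (2, 3), (3, 4), (4, 5), (5, 6), (6, 7)]

theorem e8_dynkin_diagram :
    -- (i) all eight vectors have self-intersection −2
    (pairing S S = -2 ∧ pairing P P = -2 ∧
      ∀ i ∈ Finset.Icc 1 6, pairing (v i) (v i) = -2) ∧
    -- (ii) pairings between distinct vectors in the list `S, −P, v₁, …, v₆`:
    -- they are `1` exactly on the edges of the E₈ Dynkin diagram
    -- (`⟨S,v₁⟩ = ⟨−P,v₂⟩ = ⟨vᵢ,v_{i+1}⟩ = 1`) and `0` otherwise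
    (∀ i j : Fin 8, i ≠ j →
      pairing (w i) (w j) = if (i, j) ∈ edges ∨ (j, i) ∈ edges then 1 else 0) ∧
    -- (iii) each of the eight vectors is orthogonal to E', G', F and C
    (∀ i : Fin 8, pairing (w i) E' = 0 ∧ pairing (w i) G' = 0 ∧
      pairing (w i) F = 0 ∧ pairing (w i) C = 0) ∧
    -- (iv) `⟨v₂, D⟩ = 1` (the trivalent vertex, index 3) and `⟨v, D⟩ = 0`
    -- for every other vector in the list
    (∀ i : Fin 8, pairing (w i) D = if i = 3 then 1 else 0) := by
  refine ⟨⟨by decide, by decide, by decide⟩, by decide, by decide, by decide⟩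

end ALE.E8
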